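/- Let k be a field of characteristic 2 and r ≥ 1. The k-algebra homomorphism σ from k[u_1,u_3,…,u_{2r−1}, t_1,…,t_r] to k[s_1,…,s_r, t_1,…,t_r] which is the identity on the t_i and sends u_{2a+1} (for 0 ≤ a ≤ r−1) to ∑_{m=1}^r s_m · e_a(t_1,…,\hat{t_m},…,t_r) is injective. -/

import Mathlib

open MvPolynomial Finset

set_option maxHeartbeats 1000000

lemma my_vieta {ι F : Type*} [CommRing F] (S : Finset ι) (f : ι → F) (x : F) :
    ∏ j ∈ S, (x + f j) =
      ∑ a ∈ Finset.range (S.card + 1),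
        x ^ (S.card - a) * ∑ s ∈ S.powersetCard a, ∏ i ∈ s, f i := by
  classical
  have h := Multiset.prod_X_add_C_eq_sum_esymm (S.val.map f)
  have h2 := congrArg (Polynomial.eval x) h
  rw [Polynomial.eval_multiset_prod, Multiset.map_map] at h2
  simp only [Polynomial.eval_add, Polynomial.eval_X, Polynomial.eval_C, Function.comp] at h2
  rw [Polynomial.eval_finset_sum] at h2
  simp only [Polynomial.eval_mul, Polynomial.eval_pow, Polynomial.eval_X, Polynomial.eval_C,
    Multiset.card_map, Finset.esymm_map_val] at h2
  calc ∏ j ∈ S, (x + f j) = (Multiset.map (fun j => x + f j) S.val).prod := rfl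
    _ = _ := by
        rw [Multiset.map_map] at h2
        simp only [Function.comp_def] at h2
        rw [h2]
        exact Finset.sum_congr (by simp) fun a _ => mul_comm _ _

theorem odd_u_classes_substitution_injective
    (k : Type*) [Field k] [CharP k 2] (r : ℕ) (hr : 1 ≤ r) :
    Function.Injective
      (MvPolynomial.aeval
        (fun v : Fin r ⊕ Fin r =>
          match v with
          | Sum.inl a =>
              ∑ m : Fin r,
                X (Sum.inl m) *
                  ∑ s ∈ Finset.powersetCard (a : ℕ) ((Finset.univ : Finset (Fin r)).erase m),
                    ∏ i ∈ s, X (Sum.inr i)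
          | Sum.inr i => X (Sum.inr i)) :
        MvPolynomial (Fin r ⊕ Fin r) k →ₐ[k] MvPolynomial (Fin r ⊕ Fin r) k) := by
  classical
  rw [← algebraicIndependent_iff_injective_aeval]
  set R := MvPolynomial (Fin r ⊕ Fin r) k with hR
  let F := FractionRing R
  have hinj : Function.Injective (algebraMap R F) := IsFractionRing.injective _ _
  haveI : CharP F 2 := charP_of_injective_algebraMap ((algebraMap k F).injective) 2
  set T : Fin r → F := fun i => algebraMap R F (X (Sum.inr i)) with hT
  set Y : Fin r → F := fun a => algebraMap R F (X (Sum.inl a)) with hY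
  set M : Matrix (Fin r) (Fin r) F := Matrix.of fun a m =>
    ∑ s ∈ Finset.powersetCard (a : ℕ) ((Finset.univ : Finset (Fin r)).erase m),
      ∏ i ∈ s, T i with hM
  set W : Matrix (Fin r) (Fin r) F := Matrix.of fun i a => T i ^ (r - 1 - (a : ℕ)) with hW
  set d : Fin r → F := fun m => ∏ j ∈ (Finset.univ : Finset (Fin r)).erase m, (T m + T j)
    with hd
  have hTinj : Function.Injective T := by
    intro i j h
    have := hinj h
    exact Sum.inr_injective (MvPolynomial.X_injective this)
  have hTne : ∀ i j : Fin r, i ≠ j → T i + T j ≠ 0 := by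
    intro i j hij h
    have : T i = T j := by
      have := eq_neg_of_add_eq_zero_left h
      rwa [CharTwo.neg_eq] at this
    exact hij (hTinj this)
  have hdne : ∀ m, d m ≠ 0 := by
    intro m
    rw [hd]
    refine Finset.prod_ne_zero_iff.2 fun j hj => ?_
    exact hTne m j (fun e => (Finset.ne_of_mem_erase hj) e.symm)
  have hcard : ∀ m : Fin r, ((Finset.univ : Finset (Fin r)).erase m).card = r - 1 := by
    intro m; rw [Finset.card_erase_of_mem (Finset.mem_univ m), Finset.card_univ, Fintype.card_fin]
  have hWM : W * M = Matrix.diagonal d := by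
    ext i m
    rw [Matrix.mul_apply, Matrix.diagonal_apply]
    have key : ∑ a : Fin r, W i a * M a m
        = ∏ j ∈ (Finset.univ : Finset (Fin r)).erase m, (T i + T j) := by
      rw [my_vieta ((Finset.univ : Finset (Fin r)).erase m) T (T i), hcard m,
        Nat.sub_add_cancel hr, ← Fin.sum_univ_eq_sum_range]
      exact Finset.sum_congr rfl fun a _ => rfl
    rw [key]
    by_cases h : i = m
    · subst h; simp [hd]
    · rw [if_neg h]
      exact Finset.prod_eq_zero (Finset.mem_erase.2 ⟨h, Finset.mem_univ i⟩)
        (by rw [← two_mul, show (2:F) = 0 from by exact_mod_cast CharP.cast_eq_zero F 2,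
          zero_mul] : T i + T i = 0)
  have hDet : IsUnit (Matrix.diagonal d).det := by
    rw [Matrix.det_diagonal]
    exact (Finset.prod_ne_zero_iff.2 fun m _ => hdne m).isUnit
  set N : Matrix (Fin r) (Fin r) F := (Matrix.diagonal d)⁻¹ * W with hN
  have hNM : N * M = 1 := by
    rw [hN, Matrix.mul_assoc, hWM, Matrix.nonsing_inv_mul _ hDet]
  have hMN : M * N = 1 := mul_eq_one_comm.mpr hNM
  set g : Fin r ⊕ Fin r → F :=
    Sum.elim (fun m => ∑ b : Fin r, N m b * Y b) T with hg
  refine AlgebraicIndependent.of_comp (aeval g) ?_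
  have base : AlgebraicIndependent k (fun v : Fin r ⊕ Fin r => algebraMap R F (X v)) :=
    (MvPolynomial.algebraicIndependent_X (Fin r ⊕ Fin r) k).map'
      (f := IsScalarTower.toAlgHom k R F) hinj
  have heq : (⇑(aeval g : R →ₐ[k] F)) ∘
      (fun v : Fin r ⊕ Fin r =>
        match v with
        | Sum.inl a =>
            ∑ m : Fin r,
              X (Sum.inl m) *
                ∑ s ∈ Finset.powersetCard (a : ℕ) ((Finset.univ : Finset (Fin r)).erase m),
                  ∏ i ∈ s, X (Sum.inr i)
        | Sum.inr i => X (Sum.inr i))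
      = fun v : Fin r ⊕ Fin r => algebraMap R F (X v) := by
    funext v
    rcases v with a | i
    · show (aeval g : R →ₐ[k] F) (∑ m : Fin r, X (Sum.inl m) *
        ∑ s ∈ Finset.powersetCard (a : ℕ) ((Finset.univ : Finset (Fin r)).erase m),
          ∏ i ∈ s, X (Sum.inr i)) = Y a
      rw [map_sum]
      have step : ∀ m : Fin r, (aeval g : R →ₐ[k] F) (X (Sum.inl m) *
          ∑ s ∈ Finset.powersetCard (a : ℕ) ((Finset.univ : Finset (Fin r)).erase m),
            ∏ i ∈ s, X (Sum.inr i)) = (∑ b : Fin r, N m b * Y b) * M a m := by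
        intro m
        rw [map_mul, map_sum, aeval_X]
        congr 1
        show (∑ s ∈ Finset.powersetCard (a : ℕ) ((Finset.univ : Finset (Fin r)).erase m),
          (aeval g : R →ₐ[k] F) (∏ i ∈ s, X (Sum.inr i)))
            = ∑ s ∈ Finset.powersetCard (a : ℕ) ((Finset.univ : Finset (Fin r)).erase m),
              ∏ i ∈ s, T i
        refine Finset.sum_congr rfl fun s _ => ?_
        rw [map_prod]
        exact Finset.prod_congr rfl fun i _ => by rw [aeval_X]; simp only [hg, Sum.elim_inr]
      rw [Finset.sum_congr rfl fun m _ => step m]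
      have swap : ∑ m : Fin r, (∑ b : Fin r, N m b * Y b) * M a m
          = ∑ b : Fin r, (M * N) a b * Y b := by
        calc ∑ m : Fin r, (∑ b : Fin r, N m b * Y b) * M a m
            = ∑ m : Fin r, ∑ b : Fin r, N m b * Y b * M a m :=
              Finset.sum_congr rfl fun m _ => Finset.sum_mul _ _ _
          _ = ∑ b : Fin r, ∑ m : Fin r, N m b * Y b * M a m := Finset.sum_comm
          _ = ∑ b : Fin r, (M * N) a b * Y b :=
              Finset.sum_congr rfl fun b _ => by
                rw [Matrix.mul_apply, Finset.sum_mul]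
                exact Finset.sum_congr rfl fun m _ => by ring
      rw [swap, hMN]
      calc ∑ b : Fin r, (1 : Matrix (Fin r) (Fin r) F) a b * Y b
          = ∑ b : Fin r, (if a = b then Y b else 0) := by
            refine Finset.sum_congr rfl fun b _ => ?_
            rw [Matrix.one_apply]
            split <;> simp
        _ = Y a := by rw [Finset.sum_ite_eq]; simp
    · show (aeval g : R →ₐ[k] F) (X (Sum.inr i)) = T i
      rw [aeval_X]
      simp only [hg, Sum.elim_inr]
  rw [heq]
  exact base
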